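/- Let A be a random variable taking values in the k-element subsets of N = [n] such that Pr[i ∈ A] = k/n for every agent i (a fair selection). Let d be a pseudo-metric on N ∪ C, let c' ∈ C, and for each k-set P let c(P) minimize SC(P,·). Then E[SC(c(A))] ≤ (3 − 2k/n)·SC(c'), where SC(c) = Σ_{i∈N} d(i,c). In particular, the ex-ante distortion of any fair selection algorithm is at most 3 − 2k/n. -/

import Mathlib

/-- Any fair selection algorithm (a distribution over `k`-subsets of
`N` putting each agent on the panel with probability `k/n`) has expected social
cost at most `(3 − 2k/n)·SC(c')` for every alternative `c'`; in particular its
ex-ante distortion is at most `3 − 2k/n`. -/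
theorem stmt_3 {V : Type*} [DecidableEq V] (d : V → V → ℝ)
    (hsymm : ∀ x y, d x y = d y x)
    (htri : ∀ x y z, d x z ≤ d x y + d y z)
    (hnonneg : ∀ x y, 0 ≤ d x y)
    (N C : Finset V) (n k : ℕ) (hn : N.card = n) (hkpos : 0 < k) (hkn : k ≤ n)
    (p : Finset V → ℝ) (hp0 : ∀ P, 0 ≤ p P)
    (hpsum : ∑ P ∈ N.powersetCard k, p P = 1)
    (hfair : ∀ i ∈ N,
      ∑ P ∈ (N.powersetCard k).filter (fun P => i ∈ P), p P = (k : ℝ) / n)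
    (cP : Finset V → V)
    (hsel : ∀ P ∈ N.powersetCard k,
      cP P ∈ C ∧ ∀ c ∈ C, ∑ i ∈ P, d i (cP P) ≤ ∑ i ∈ P, d i c)
    (c' : V) (hc' : c' ∈ C) :
    ∑ P ∈ N.powersetCard k, p P * ∑ i ∈ N, d i (cP P) ≤
      (3 - 2 * (k : ℝ) / n) * ∑ i ∈ N, d i c' := by
  have hk0 : (0:ℝ) < k := by exact_mod_cast hkpos
  have hn0 : (0:ℝ) < n := by exact_mod_cast lt_of_lt_of_le hkpos hkn
  set A : ℝ := ∑ i ∈ N, d i c' with hA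
  have hA0 : 0 ≤ A := Finset.sum_nonneg fun i _ => hnonneg i c'
  set B : ℝ := 2 * ((n : ℝ) - k) / k with hB
  -- pointwise bound
  have key : ∀ P ∈ N.powersetCard k,
      ∑ i ∈ N, d i (cP P) ≤ A + B * ∑ j ∈ P, d j c' := by
    intro P hP
    obtain ⟨hPsub, hPcard⟩ := Finset.mem_powersetCard.mp hP
    obtain ⟨_, hopt⟩ := hsel P hP
    have hopt' := hopt c' hc'
    set S : ℝ := ∑ j ∈ P, d j c' with hS
    have hS0 : 0 ≤ S := Finset.sum_nonneg fun i _ => hnonneg i c'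
    have hdist : d c' (cP P) ≤ 2 * S / k := by
      rw [le_div_iff₀ hk0]
      have h1 : ∑ j ∈ P, d c' (cP P) ≤ ∑ j ∈ P, (d c' j + d j (cP P)) :=
        Finset.sum_le_sum fun j _ => htri c' j (cP P)
      rw [Finset.sum_const, hPcard, nsmul_eq_mul, Finset.sum_add_distrib] at h1
      have h2 : ∑ j ∈ P, d c' j = S := by
        rw [hS]; exact Finset.sum_congr rfl fun j _ => hsymm c' j
      rw [h2] at h1
      calc d c' (cP P) * k = (k : ℝ) * d c' (cP P) := by ring
        _ ≤ S + ∑ j ∈ P, d j (cP P) := h1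
        _ ≤ S + S := by linarith [hopt']
        _ = 2 * S := by ring
    have hsplit : ∑ i ∈ N \ P, d i (cP P) + ∑ i ∈ P, d i (cP P) = ∑ i ∈ N, d i (cP P) :=
      Finset.sum_sdiff hPsub
    have hcard : ((N \ P).card : ℝ) = (n : ℝ) - k := by
      rw [Finset.card_sdiff_of_subset hPsub, hn, hPcard, Nat.cast_sub hkn]
    have hout : ∑ i ∈ N \ P, d i (cP P) ≤ ∑ i ∈ N \ P, d i c' + ((n:ℝ) - k) * (2 * S / k) := by
      calc ∑ i ∈ N \ P, d i (cP P) ≤ ∑ i ∈ N \ P, (d i c' + d c' (cP P)) :=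
            Finset.sum_le_sum fun i _ => htri i c' (cP P)
        _ = ∑ i ∈ N \ P, d i c' + ((N \ P).card : ℝ) * d c' (cP P) := by
            rw [Finset.sum_add_distrib, Finset.sum_const, nsmul_eq_mul]
        _ ≤ ∑ i ∈ N \ P, d i c' + ((n:ℝ) - k) * (2 * S / k) := by
            rw [hcard]
            have hnk : (0:ℝ) ≤ (n:ℝ) - k := by
              have : (k:ℝ) ≤ n := by exact_mod_cast hkn
              linarith
            nlinarith [mul_le_mul_of_nonneg_left hdist hnk]
    have hAsplit : ∑ i ∈ N \ P, d i c' + S = A := by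
      rw [hS, hA]; exact Finset.sum_sdiff hPsub
    have hB' : B * S = ((n:ℝ) - k) * (2 * S / k) := by
      rw [hB]; field_simp
    linarith [hopt', hsplit, hout, hAsplit, hB'.symm]
  -- swap the double sum
  have swap : ∑ P ∈ N.powersetCard k, p P * ∑ j ∈ P, d j c' = (k : ℝ) / n * A := by
    have h1 : ∀ P ∈ N.powersetCard k, p P * ∑ j ∈ P, d j c'
        = ∑ j ∈ N, (if j ∈ P then p P * d j c' else 0) := by
      intro P hP
      obtain ⟨hPsub, _⟩ := Finset.mem_powersetCard.mp hP
      rw [Finset.sum_ite_mem, Finset.inter_eq_right.mpr hPsub, Finset.mul_sum]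
    rw [Finset.sum_congr rfl h1, Finset.sum_comm]
    have h2 : ∀ j ∈ N, ∑ P ∈ N.powersetCard k, (if j ∈ P then p P * d j c' else 0)
        = (k : ℝ) / n * d j c' := by
      intro j hj
      have : ∑ P ∈ N.powersetCard k, (if j ∈ P then p P * d j c' else 0)
          = (∑ P ∈ (N.powersetCard k).filter (fun P => j ∈ P), p P) * d j c' := by
        rw [Finset.sum_filter, Finset.sum_mul]
        exact Finset.sum_congr rfl fun P _ => by split <;> simp
      rw [this, hfair j hj]
    rw [Finset.sum_congr rfl h2, hA, ← Finset.mul_sum]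
  have hB0 : 0 ≤ B := by
    rw [hB]
    have h : (k:ℝ) ≤ n := by exact_mod_cast hkn
    apply div_nonneg <;> linarith
  calc ∑ P ∈ N.powersetCard k, p P * ∑ i ∈ N, d i (cP P)
      ≤ ∑ P ∈ N.powersetCard k, p P * (A + B * ∑ j ∈ P, d j c') :=
        Finset.sum_le_sum fun P hP => mul_le_mul_of_nonneg_left (key P hP) (hp0 P)
    _ = (∑ P ∈ N.powersetCard k, p P) * A
        + B * ∑ P ∈ N.powersetCard k, p P * ∑ j ∈ P, d j c' := by
        rw [Finset.sum_mul, Finset.mul_sum, ← Finset.sum_add_distrib]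
        exact Finset.sum_congr rfl fun P _ => by ring
    _ = A + B * ((k : ℝ) / n * A) := by rw [hpsum, swap, one_mul]
    _ = (3 - 2 * (k : ℝ) / n) * A := by rw [hB]; field_simp; ring
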